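/- Let D be a division ring with center F, K a subfield containing F, and x ∈ D with xKx⁻¹ ⊆ K. If x is left algebraic over K with minimal polynomial of degree n, then the left K-span of the powers of x equals K + Kx + ⋯ + Kx^{n-1}, and every nonzero element of this span has a multiplicative inverse lying in the span. -/
import Mathlib


/-- Let `D` be a division ring, `K` a subfield with `x K x⁻¹ ⊆ K`, and `x` left algebraic
over `K` with minimal polynomial of degree `n`. Then the left `K`-span of all powers of
`x` equals `K + Kx + ⋯ + Kx^(n-1)`, and every nonzero element of this span has its
inverse in the span. -/
theorem stmt12 {D : Type*} [DivisionRing D] (K : Subfield D)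
    (hcomm : ∀ x ∈ K, ∀ y ∈ K, x * y = y * x)
    (x : D) (hinv : ∀ k ∈ K, x * k * x⁻¹ ∈ K)
    (n : ℕ) (hn : 0 < n)
    (c : Fin (n + 1) → K) (hmonic : c (Fin.last n) = 1)
    (hann : ∑ i : Fin (n + 1), (c i : D) * x ^ (i : ℕ) = 0)
    (hmin : ∀ d : Fin n → K, ∑ i : Fin n, (d i : D) * x ^ (i : ℕ) = 0 → ∀ i, d i = 0) :
    Submodule.span K (Set.range fun m : ℕ => x ^ m)
      = Submodule.span K (Set.range fun i : Fin n => x ^ (i : ℕ)) ∧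
    ∀ a ∈ Submodule.span K (Set.range fun m : ℕ => x ^ m), a ≠ 0 →
      a⁻¹ ∈ Submodule.span K (Set.range fun m : ℕ => x ^ m) := by
  by_cases hx : x = 0
  · -- degenerate case x = 0
    subst hx
    have h1mem : (0:D) ^ 0 ∈ Set.range fun i : Fin n => (0:D) ^ (i : ℕ) :=
      ⟨⟨0, hn⟩, rfl⟩
    have hspan_eq : Submodule.span K (Set.range fun m : ℕ => (0:D) ^ m)
        = Submodule.span K (Set.range fun i : Fin n => (0:D) ^ (i : ℕ)) := by
      apply le_antisymm
      · rw [Submodule.span_le]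
        rintro _ ⟨m, rfl⟩
        cases m with
        | zero => exact Submodule.subset_span h1mem
        | succ m => simp
      · exact Submodule.span_mono (by rintro _ ⟨i, rfl⟩; exact ⟨(i : ℕ), rfl⟩)
    refine ⟨hspan_eq, ?_⟩
    have hK : ∀ a ∈ Submodule.span K (Set.range fun m : ℕ => (0:D) ^ m), a ∈ K := by
      intro a ha
      induction ha using Submodule.span_induction with
      | mem w hw =>
        obtain ⟨m, rfl⟩ := hw
        cases m with
        | zero => simpa using K.one_mem
        | succ m => simpa using K.zero_mem
      | zero => exact K.zero_mem
      | add a b _ _ ha hb => exact K.add_mem ha hb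
      | smul k a _ ha => exact K.mul_mem k.2 ha
    intro a ha hane
    have hainv : a⁻¹ ∈ K := K.inv_mem (hK a ha)
    have h1 : (1:D) ∈ Submodule.span K (Set.range fun m : ℕ => (0:D) ^ m) :=
      Submodule.subset_span ⟨0, by simp⟩
    have h2 := Submodule.smul_mem _ (⟨a⁻¹, hainv⟩ : K) h1
    have heq : (⟨a⁻¹, hainv⟩ : K) • (1 : D) = a⁻¹ := by
      show a⁻¹ * 1 = a⁻¹; rw [mul_one]
    rwa [heq] at h2
  · -- main case x ≠ 0
    set V := Submodule.span K (Set.range fun i : Fin n => x ^ (i : ℕ)) with hV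
    have hgen : ∀ i : Fin n, x ^ (i : ℕ) ∈ V := fun i => Submodule.subset_span ⟨i, rfl⟩
    -- x^n ∈ V
    have hxn : x ^ n ∈ V := by
      have h := hann
      rw [Fin.sum_univ_castSucc] at h
      simp only [hmonic, Fin.val_last, Fin.coe_castSucc, OneMemClass.coe_one, one_mul] at h
      have heq : x ^ n = -∑ i : Fin n, ((c i.castSucc : D) * x ^ (i : ℕ)) :=
        eq_neg_of_add_eq_zero_right h
      rw [heq]
      exact neg_mem (Submodule.sum_mem _ fun i _ =>
        Submodule.smul_mem _ (c i.castSucc) (hgen i))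
    have hpow_le : ∀ m, m ≤ n → x ^ m ∈ V := by
      intro m hm
      rcases lt_or_eq_of_le hm with h | h
      · exact hgen ⟨m, h⟩
      · rw [h]; exact hxn
    -- left multiplication by x preserves V
    have hxV : ∀ v ∈ V, x * v ∈ V := by
      intro v hv
      induction hv using Submodule.span_induction with
      | mem w hw =>
        obtain ⟨i, rfl⟩ := hw
        rw [← pow_succ']
        exact hpow_le _ i.2
      | zero => simpa using Submodule.zero_mem V
      | add a b _ _ ha hb => rw [mul_add]; exact add_mem ha hb
      | smul k a _ ha =>
        have hk' : x * (k : D) * x⁻¹ ∈ K := hinv _ k.2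
        have heq : x * (k • a) = (⟨x * (k : D) * x⁻¹, hk'⟩ : K) • (x * a) := by
          show x * ((k : D) * a) = (x * (k : D) * x⁻¹) * (x * a)
          rw [mul_assoc (x * (k : D)) x⁻¹ (x * a), ← mul_assoc x⁻¹ x a,
            inv_mul_cancel₀ hx, one_mul, mul_assoc]
        rw [heq]
        exact Submodule.smul_mem _ _ ha
    -- all powers of x lie in V
    have hpows : ∀ m : ℕ, x ^ m ∈ V := by
      intro m
      induction m with
      | zero => exact hpow_le 0 (Nat.zero_le n)
      | succ m ih => rw [pow_succ']; exact hxV _ ih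
    have hWV : Submodule.span K (Set.range fun m : ℕ => x ^ m) = V := by
      apply le_antisymm
      · rw [Submodule.span_le]; rintro _ ⟨m, rfl⟩; exact hpows m
      · exact Submodule.span_mono (by rintro _ ⟨i, rfl⟩; exact ⟨(i : ℕ), rfl⟩)
    -- iterated conjugation stays in K
    have hconj : ∀ i : ℕ, ∀ k ∈ K, x ^ i * k * (x⁻¹) ^ i ∈ K := by
      intro i
      induction i with
      | zero => intro k hk; simpa using hk
      | succ i ih =>
        intro k hk
        have h1 := hinv _ (ih k hk)
        have heq : x ^ (i + 1) * k * (x⁻¹) ^ (i + 1)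
            = x * (x ^ i * k * (x⁻¹) ^ i) * x⁻¹ := by
          rw [pow_succ' x i, pow_succ x⁻¹ i]
          simp only [mul_assoc]
        rw [heq]
        exact h1
    -- V is closed under right multiplication by elements of K
    have hVk : ∀ k ∈ K, ∀ v ∈ V, v * k ∈ V := by
      intro k hk v hv
      induction hv using Submodule.span_induction with
      | mem w hw =>
        obtain ⟨i, rfl⟩ := hw
        have hc := hconj (i : ℕ) k hk
        have heq : x ^ (i : ℕ) * k = (⟨_, hc⟩ : K) • x ^ (i : ℕ) := by
          show x ^ (i : ℕ) * k = (x ^ (i : ℕ) * k * (x⁻¹) ^ (i : ℕ)) * x ^ (i : ℕ)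
          rw [mul_assoc, inv_pow, inv_mul_cancel₀ (pow_ne_zero _ hx), mul_one]
        rw [heq]
        exact Submodule.smul_mem _ _ (hgen i)
      | zero => simpa using Submodule.zero_mem V
      | add a b _ _ ha hb => rw [add_mul]; exact add_mem ha hb
      | smul k' a _ ha =>
        have heq : (k' • a) * k = k' • (a * k) := by
          show ((k' : D) * a) * k = (k' : D) * (a * k)
          rw [mul_assoc]
        rw [heq]
        exact Submodule.smul_mem _ _ ha
    -- V is closed under right multiplication by x
    have hVx : ∀ v ∈ V, v * x ∈ V := by
      intro v hv
      induction hv using Submodule.span_induction with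
      | mem w hw =>
        obtain ⟨i, rfl⟩ := hw
        rw [← pow_succ]
        exact hpow_le _ i.2
      | zero => simpa using Submodule.zero_mem V
      | add a b _ _ ha hb => rw [add_mul]; exact add_mem ha hb
      | smul k a _ ha =>
        have heq : (k • a) * x = k • (a * x) := by
          show ((k : D) * a) * x = (k : D) * (a * x)
          rw [mul_assoc]
        rw [heq]
        exact Submodule.smul_mem _ _ ha
    -- V closed under right multiplication by powers of x
    have hVxm : ∀ m : ℕ, ∀ v ∈ V, v * x ^ m ∈ V := by
      intro m
      induction m with
      | zero => intro v hv; simpa using hv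
      | succ m ih =>
        intro v hv
        rw [pow_succ, ← mul_assoc]
        exact hVx _ (ih v hv)
    -- V is closed under multiplication
    have hmul : ∀ b ∈ V, ∀ a ∈ V, a * b ∈ V := by
      intro b hb
      induction hb using Submodule.span_induction with
      | mem w hw =>
        obtain ⟨i, rfl⟩ := hw
        intro a ha
        exact hVxm _ a ha
      | zero => intro a _; simpa using Submodule.zero_mem V
      | add b c _ _ hb hc =>
        intro a ha
        rw [mul_add]; exact add_mem (hb a ha) (hc a ha)
      | smul k b _ hb =>
        intro a ha
        have heq : a * (k • b) = (a * (k : D)) * b := by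
          show a * ((k : D) * b) = (a * (k : D)) * b
          rw [mul_assoc]
        rw [heq]
        exact hb _ (hVk _ k.2 a ha)
    refine ⟨hWV, ?_⟩
    intro a ha hane
    rw [hWV] at ha ⊢
    haveI : FiniteDimensional K V := FiniteDimensional.span_of_finite K (Set.finite_range _)
    let f : V →ₗ[K] V :=
      { toFun := fun v => ⟨(v : D) * a, hmul a ha _ v.2⟩
        map_add' := fun u v => Subtype.ext (by
          show ((u : D) + v) * a = (u : D) * a + (v : D) * a
          rw [add_mul])
        map_smul' := fun k v => Subtype.ext (by
          show ((k : D) * v) * a = (k : D) * ((v : D) * a)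
          rw [mul_assoc]) }
    have hfinj : Function.Injective f := by
      intro u v huv
      apply Subtype.ext
      have h1 : (u : D) * a = (v : D) * a := congrArg Subtype.val huv
      exact mul_right_cancel₀ hane h1
    have hfsurj : Function.Surjective f := LinearMap.injective_iff_surjective.mp hfinj
    have h1V : (1 : D) ∈ V := by simpa using hpow_le 0 (Nat.zero_le n)
    obtain ⟨v, hv⟩ := hfsurj ⟨1, h1V⟩
    have hva : (v : D) * a = 1 := congrArg Subtype.val hv
    have hiv : a⁻¹ = (v : D) := (eq_inv_of_mul_eq_one_left hva).symm
    rw [hiv]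
    exact v.2
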